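/- If x : ℝ → ℝ is C¹ and the span V of its translates is finite-dimensional, then x' lies in the closure properties of V in the following sense: x' also has translates spanning a subspace of dimension at most dim V. -/

import Mathlib

/-- The submodule of differentiable functions `ℝ → ℝ`. -/
def diffSub : Submodule ℝ (ℝ → ℝ) where
  carrier := {f | Differentiable ℝ f}
  add_mem' := fun hf hg => hf.add hg
  zero_mem' := differentiable_const 0
  smul_mem' := fun c _ hf => hf.const_smul c

theorem stmt4 (x : ℝ → ℝ) (hx : ContDiff ℝ 1 x)
    (V V' : Submodule ℝ (ℝ → ℝ))
    (hV : V = Submodule.span ℝ {f : ℝ → ℝ | ∃ t : ℝ, f = fun u => x (t + u)})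
    (hV' : V' = Submodule.span ℝ {f : ℝ → ℝ | ∃ t : ℝ, f = fun u => deriv x (t + u)})
    (hfin : FiniteDimensional ℝ V) :
    FiniteDimensional ℝ V' ∧ Module.finrank ℝ V' ≤ Module.finrank ℝ V := by
  have hxd : Differentiable ℝ x := hx.differentiable one_ne_zero
  -- every element of V is differentiable
  have hVle : V ≤ diffSub := by
    rw [hV]
    apply Submodule.span_le.2
    rintro f ⟨t, rfl⟩
    exact hxd.comp ((differentiable_const t).add differentiable_id)
  -- the derivative as a linear map on V
  let L : V →ₗ[ℝ] (ℝ → ℝ) :=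
    { toFun := fun f => deriv (f : ℝ → ℝ)
      map_add' := by
        rintro ⟨f, hf⟩ ⟨g, hg⟩
        funext u
        exact deriv_add ((hVle hf) u) ((hVle hg) u)
      map_smul' := by
        rintro c ⟨f, hf⟩
        funext u
        simp only [RingHom.id_apply]
        exact deriv_const_smul c ((hVle hf) u) }
  have hV'le : V' ≤ LinearMap.range L := by
    rw [hV']
    apply Submodule.span_le.2
    rintro f ⟨t, rfl⟩
    have hmem : (fun u => x (t + u)) ∈ V := by
      rw [hV]; exact Submodule.subset_span ⟨t, rfl⟩
    refine ⟨⟨fun u => x (t + u), hmem⟩, ?_⟩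
    funext u
    show deriv (fun u => x (t + u)) u = deriv x (t + u)
    rw [deriv_comp_const_add]
  have hrangefin : FiniteDimensional ℝ (LinearMap.range L) := inferInstance
  have hfin' : FiniteDimensional ℝ V' := Submodule.finiteDimensional_of_le hV'le
  refine ⟨hfin', ?_⟩
  calc Module.finrank ℝ V' ≤ Module.finrank ℝ (LinearMap.range L) :=
        Submodule.finrank_mono hV'le
    _ ≤ Module.finrank ℝ V := LinearMap.finrank_range_le L
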